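/- Let r, s ≥ 0 be integers with n = 2(r+s) ≥ 1, and let v ∈ (ℤ/4ℤ)^n have type (t₀, t₁, t₂, t₃). Then 2 · C(n, t₀+t₂) · (|S(v,0)| + |S(v,2)|) = C(n; r,s,r,s) · c, where c is the coefficient of x^{t₀+t₂} y^{t₁+t₃} in the integer polynomial (x+y)^n + (x+y)^{2r}(x−y)^{2s}. -/

import Mathlib

/-- The number of coordinates of `v ∈ (ℤ/4ℤ)^n` equal to `k`. -/
def typeCount {n : ℕ} (v : Fin n → ZMod 4) (k : ZMod 4) : ℕ :=
  (Finset.univ.filter fun i => v i = k).card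

/-- `v ∈ (ℤ/4ℤ)^n` has type `(t₀, t₁, t₂, t₃)`. -/
def HasType {n : ℕ} (v : Fin n → ZMod 4) (t0 t1 t2 t3 : ℕ) : Prop :=
  typeCount v 0 = t0 ∧ typeCount v 1 = t1 ∧ typeCount v 2 = t2 ∧ typeCount v 3 = t3

instance {n : ℕ} (v : Fin n → ZMod 4) (t0 t1 t2 t3 : ℕ) :
    Decidable (HasType v t0 t1 t2 t3) := by
  unfold HasType; infer_instance

/-- `|S(v, a)|`: the number of vectors `b` of type `(r, s, r, s)` with
`v · b = a` in `ℤ/4ℤ`. -/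
def Scard {n : ℕ} (r s : ℕ) (v : Fin n → ZMod 4) (a : ZMod 4) : ℕ :=
  (Finset.univ.filter fun b : Fin n → ZMod 4 =>
    HasType b r s r s ∧ (∑ i, v i * b i) = a).card

/-- The eigenvalue `λ(v) = |S(v,0)| - |S(v,2)|` of `Cay((ℤ/4ℤ)^n, S)`. -/
def lambdaEV {n : ℕ} (r s : ℕ) (v : Fin n → ZMod 4) : ℤ :=
  (Scard r s v 0 : ℤ) - (Scard r s v 2 : ℤ)

/-- The multinomial coefficient `C(n; r, s, r, s)` (with `n = 2(r+s)`). -/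
def multinomRSRS (r s : ℕ) : ℕ :=
  Nat.multinomial Finset.univ ![r, s, r, s]

section BetaAux

open Finset MvPolynomial


lemma trinom (N p q : ℕ) (hp : p ≤ N) (hq : q ≤ N) :
    N.choose p * (N - p).choose q = N.choose q * (N - q).choose p := by
  by_cases h : p + q ≤ N
  · have h1 := Nat.choose_mul (n := N) (Nat.le_add_right p q)
    have h2 := Nat.choose_mul (n := N) (Nat.le_add_left q p)
    rw [Nat.add_sub_cancel_left] at h1
    rw [Nat.add_sub_cancel] at h2
    have hs : (p + q).choose p = (p + q).choose q := by
      rw [← Nat.choose_symm (Nat.le_add_left q p)]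
      congr 1
      omega
    rw [← h1, ← h2, hs]
  · rw [Nat.choose_eq_zero_of_lt (by omega : N - p < q),
      Nat.choose_eq_zero_of_lt (by omega : N - q < p), mul_zero, mul_zero]

lemma key_choose (n b B j : ℕ) (hb : b ≤ n) (hB : B ≤ n) (hjb : j ≤ b) (hjB : j ≤ B) :
    n.choose b * (b.choose j * (n - b).choose (B - j)) =
    n.choose B * (B.choose j * (n - B).choose (b - j)) := by
  rw [← mul_assoc, Nat.choose_mul (n := n) hjb, ← mul_assoc, Nat.choose_mul (n := n) hjB]
  have e1 : n - b = (n - j) - (b - j) := by omega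
  have e2 : n - B = (n - j) - (B - j) := by omega
  rw [mul_assoc, mul_assoc, e1, e2,
    trinom (n - j) (b - j) (B - j) (by omega) (by omega)]

/-- The signed Krawtchouk-type sum. -/
def Dsum (A B c : ℕ) : ℤ :=
  ∑ j ∈ Finset.range (c + 1), (-1) ^ j * (A.choose (c - j)) * (B.choose j)

lemma sum_range_trim (c d : ℕ) (f : ℕ → ℤ) (h : ∀ j, d < j → f j = 0) :
    ∑ j ∈ Finset.range (c + 1), f j = ∑ j ∈ Finset.range (min c d + 1), f j := by
  symm
  apply Finset.sum_subset
  · intro x hx; simp only [Finset.mem_range] at *; omega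
  · intro x hx hnx; simp only [Finset.mem_range] at hx hnx; exact h x (by omega)

lemma recip (n b B : ℕ) (hb : b ≤ n) (hB : B ≤ n) :
    (n.choose b : ℤ) * Dsum (n - b) b B = (n.choose B : ℤ) * Dsum (n - B) B b := by
  unfold Dsum
  rw [Finset.mul_sum, Finset.mul_sum]
  rw [sum_range_trim B b _ (fun j hj => by
    rw [Nat.choose_eq_zero_of_lt hj]; push_cast; ring)]
  rw [sum_range_trim b B _ (fun j hj => by
    rw [Nat.choose_eq_zero_of_lt hj]; push_cast; ring)]
  rw [Nat.min_comm B b]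
  apply Finset.sum_congr rfl
  intro j hj
  simp only [Finset.mem_range] at hj
  have hjb : j ≤ b := by omega
  have hjB : j ≤ B := by omega
  have hk := key_choose n b B j hb hB hjb hjB
  have : ((n.choose b * (b.choose j * (n - b).choose (B - j)) : ℕ) : ℤ)
      = ((n.choose B * (B.choose j * (n - B).choose (b - j)) : ℕ) : ℤ) :=
    Nat.cast_inj.mpr hk
  push_cast at this
  linear_combination (-1 : ℤ) ^ j * this

lemma Dsum_zero (A c : ℕ) : Dsum A 0 c = (A.choose c : ℤ) := by
  unfold Dsum
  rw [Finset.sum_eq_single 0]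
  · simp
  · intro j hj hj0
    rw [show (0:ℕ).choose j = 0 from Nat.choose_eq_zero_of_lt (Nat.pos_of_ne_zero hj0)]
    push_cast; ring
  · intro h; simp at h

/-- Even-part sum. -/
def Esum (p q c : ℕ) : ℕ :=
  ∑ j ∈ Finset.range (c + 1), if Even j then p.choose j * q.choose (c - j) else 0

lemma two_esum (p q c : ℕ) :
    (2 * (Esum p q c) : ℤ) = ((p + q).choose c : ℤ) + Dsum q p c := by
  have hv : (((p + q).choose c : ℕ) : ℤ)
      = ∑ j ∈ Finset.range (c + 1), (p.choose j : ℤ) * (q.choose (c - j)) := by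
    rw [Nat.add_choose_eq, Finset.Nat.sum_antidiagonal_eq_sum_range_succ_mk]
    push_cast; rfl
  unfold Esum Dsum
  rw [hv, ← Finset.sum_add_distrib]
  push_cast
  rw [Finset.mul_sum]
  apply Finset.sum_congr rfl
  intro j hj
  by_cases hE : Even j
  · rw [if_pos hE, hE.neg_one_pow]; push_cast; ring
  · rw [if_neg hE, (Nat.not_even_iff_odd.1 hE).neg_one_pow]; ring


lemma exp_eq_iff (i Ai j Bj a b : ℕ) :
    ((Finsupp.single (1 : Fin 2) i + Finsupp.single 0 Ai)
      + (Finsupp.single 1 j + Finsupp.single 0 Bj)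
      = Finsupp.single 0 a + Finsupp.single 1 b) ↔ (Ai + Bj = a ∧ i + j = b) := by
  constructor
  · intro h
    constructor
    · have := DFunLike.congr_fun h (0 : Fin 2)
      simpa [Finsupp.single_apply] using this
    · have := DFunLike.congr_fun h (1 : Fin 2)
      simpa [Finsupp.single_apply] using this
  · rintro ⟨h1, h2⟩
    ext x
    fin_cases x <;> simp [Finsupp.single_apply, h1, h2]

lemma add_pow_expand (A : ℕ) :
    ((X 0 + X 1 : MvPolynomial (Fin 2) ℤ)) ^ A
      = ∑ i ∈ Finset.range (A + 1),
          monomial (Finsupp.single 1 i + Finsupp.single 0 (A - i)) ((A.choose i : ℤ)) := by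
  rw [add_comm (X 0) (X 1), add_pow]
  apply Finset.sum_congr rfl
  intro i hi
  rw [X_pow_eq_monomial, X_pow_eq_monomial,
    ← map_natCast (C : ℤ →+* MvPolynomial (Fin 2) ℤ), monomial_mul, C_apply, monomial_mul]
  simp

lemma sub_pow_expand (B : ℕ) :
    ((X 0 - X 1 : MvPolynomial (Fin 2) ℤ)) ^ B
      = ∑ j ∈ Finset.range (B + 1),
          monomial (Finsupp.single 1 j + Finsupp.single 0 (B - j))
            ((-1) ^ j * (B.choose j : ℤ)) := by
  rw [sub_eq_add_neg, add_comm (X 0), add_pow]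
  apply Finset.sum_congr rfl
  intro j hj
  rw [neg_pow, X_pow_eq_monomial, X_pow_eq_monomial,
    ← map_natCast (C : ℤ →+* MvPolynomial (Fin 2) ℤ), C_apply]
  rw [show ((-1 : MvPolynomial (Fin 2) ℤ)) ^ j = C ((-1 : ℤ) ^ j) by
    rw [map_pow, map_neg, map_one]]
  rw [C_apply]
  simp only [monomial_mul]
  congr 1
  · simp
  · ring

lemma coeff_lemma (A B a b : ℕ) (h : a + b = A + B) :
    MvPolynomial.coeff (Finsupp.single 0 a + Finsupp.single 1 b)
      ((X 0 + X 1) ^ A * (X 0 - X 1) ^ B : MvPolynomial (Fin 2) ℤ) = Dsum A B b := by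
  rw [add_pow_expand, sub_pow_expand, Finset.sum_mul_sum]
  have step1 : ∀ i ∈ Finset.range (A + 1), ∀ j ∈ Finset.range (B + 1),
      MvPolynomial.coeff (Finsupp.single (0 : Fin 2) a + Finsupp.single 1 b)
        ((monomial (Finsupp.single (1 : Fin 2) i + Finsupp.single 0 (A - i)) ((A.choose i : ℤ)))
          * monomial (Finsupp.single (1 : Fin 2) j + Finsupp.single 0 (B - j))
              ((-1) ^ j * (B.choose j : ℤ)))
      = if i + j = b then (A.choose i : ℤ) * ((-1) ^ j * (B.choose j : ℤ)) else 0 := by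
    intro i hi j hj
    simp only [Finset.mem_range] at hi hj
    rw [monomial_mul, coeff_monomial]
    split_ifs with h1 h2 h3
    · rfl
    · exact absurd ((exp_eq_iff i (A - i) j (B - j) a b).1 h1).2 h2
    · exact absurd ((exp_eq_iff i (A - i) j (B - j) a b).2 ⟨by omega, h3⟩) h1
    · rfl
  simp only [coeff_sum]
  refine (Finset.sum_congr rfl fun i hi =>
    Finset.sum_congr rfl fun j hj => step1 i hi j hj).trans ?_
  rw [Finset.sum_comm]
  have inner_eq : ∀ j, j ≤ b → ∑ i ∈ Finset.range (A + 1),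
      (if i + j = b then (A.choose i : ℤ) * ((-1) ^ j * (B.choose j : ℤ)) else 0)
      = (-1) ^ j * (A.choose (b - j) : ℤ) * (B.choose j : ℤ) := by
    intro j hjb
    have hcond : ∀ i, (i + j = b) ↔ (i = b - j) := fun i => by omega
    simp_rw [hcond]
    rw [Finset.sum_ite_eq' (Finset.range (A + 1)) (b - j)
      (fun i => (A.choose i : ℤ) * ((-1) ^ j * (B.choose j : ℤ)))]
    split_ifs with hmem
    · ring
    · simp only [Finset.mem_range, not_lt] at hmem
      rw [Nat.choose_eq_zero_of_lt (by omega)]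
      push_cast; ring
  have inner_zero : ∀ j, b < j → ∑ i ∈ Finset.range (A + 1),
      (if i + j = b then (A.choose i : ℤ) * ((-1) ^ j * (B.choose j : ℤ)) else 0) = 0 := by
    intro j hjb
    apply Finset.sum_eq_zero
    intro i hi
    rw [if_neg (by omega)]
  -- both sides equal sum over range (min b B + 1)
  have trim : ∀ (c d : ℕ) (f : ℕ → ℤ), (∀ j, d < j → f j = 0) →
      ∑ j ∈ Finset.range (c + 1), f j = ∑ j ∈ Finset.range (min c d + 1), f j := by
    intro c d f hf
    symm
    apply Finset.sum_subset
    · intro x hx; simp only [Finset.mem_range] at *; omega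
    · intro x hx hnx; simp only [Finset.mem_range] at hx hnx; exact hf x (by omega)
  rw [trim B b _ (fun j hj => inner_zero j hj)]
  unfold Dsum
  rw [trim b B _ (fun j hj => by
    rw [Nat.choose_eq_zero_of_lt hj]; push_cast; ring)]
  rw [Nat.min_comm B b]
  apply Finset.sum_congr rfl
  intro j hj
  simp only [Finset.mem_range] at hj
  exact inner_eq j (by omega)

/-- odd support -/
def oddSupp {n : ℕ} (b : Fin n → ZMod 4) : Finset (Fin n) :=
  Finset.univ.filter fun i => b i = 1 ∨ b i = 3

lemma typeCount_total {n : ℕ} (v : Fin n → ZMod 4) :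
    typeCount v 0 + typeCount v 1 + typeCount v 2 + typeCount v 3 = n := by
  unfold typeCount
  have h := Finset.card_eq_sum_card_fiberwise
    (s := (Finset.univ : Finset (Fin n))) (f := v) (t := (Finset.univ : Finset (ZMod 4))) (fun i _ => Finset.mem_univ _)
  rw [Finset.card_univ, Fintype.card_fin] at h
  rw [show (Finset.univ : Finset (ZMod 4)) = {0, 1, 2, 3} from by decide] at h
  rw [show ({0, 1, 2, 3} : Finset (ZMod 4))
      = insert 0 (insert 1 (insert 2 ({3} : Finset (ZMod 4)))) from rfl] at h
  rw [Finset.sum_insert (by decide), Finset.sum_insert (by decide),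
    Finset.sum_insert (by decide), Finset.sum_singleton] at h
  omega

lemma filter_or_card {n : ℕ} (b : Fin n → ZMod 4) (x y : ZMod 4) (hxy : x ≠ y) :
    (Finset.univ.filter fun i => b i = x ∨ b i = y).card
      = typeCount b x + typeCount b y := by
  unfold typeCount
  rw [Finset.filter_or, Finset.card_union_of_disjoint]
  rw [Finset.disjoint_left]
  intro i hi hj
  simp only [Finset.mem_filter] at hi hj
  exact hxy (hi.2 ▸ hj.2)

lemma oddSupp_card {n r s : ℕ} (b : Fin n → ZMod 4) (h : HasType b r s r s) :
    (oddSupp b).card = 2 * s := by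
  obtain ⟨h0, h1, h2, h3⟩ := h
  rw [oddSupp, filter_or_card b 1 3 (by decide), h1, h3]
  omega

lemma dot_parity {n : ℕ} (v b : Fin n → ZMod 4) :
    ((∑ i, v i * b i) = 0 ∨ (∑ i, v i * b i) = 2)
      ↔ Even ((oddSupp v ∩ oddSupp b).card) := by
  set π : ZMod 4 →+* ZMod 2 := ZMod.castHom (by norm_num : (2:ℕ) ∣ 4) (ZMod 2) with hπ
  have hx : ∀ x : ZMod 4, (x = 0 ∨ x = 2) ↔ π x = 0 := by decide
  rw [hx]
  have key : π (∑ i, v i * b i) = (((oddSupp v ∩ oddSupp b).card : ℕ) : ZMod 2) := by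
    rw [map_sum]
    have e1 : ∀ i ∈ Finset.univ, i ∉ oddSupp v ∩ oddSupp b → π (v i * b i) = 0 := by
      intro i _ hi
      simp only [oddSupp, Finset.mem_inter, Finset.mem_filter, Finset.mem_univ,
        true_and] at hi
      revert hi
      have : ∀ x y : ZMod 4, ¬((x = 1 ∨ x = 3) ∧ (y = 1 ∨ y = 3)) → π (x * y) = 0 := by
        decide
      intro hi
      exact this (v i) (b i) (by tauto)
    rw [← Finset.sum_subset (Finset.subset_univ (oddSupp v ∩ oddSupp b)) e1]
    have e2 : ∀ i ∈ oddSupp v ∩ oddSupp b, π (v i * b i) = 1 := by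
      intro i hi
      simp only [oddSupp, Finset.mem_inter, Finset.mem_filter, Finset.mem_univ,
        true_and] at hi
      have : ∀ x y : ZMod 4, (x = 1 ∨ x = 3) → (y = 1 ∨ y = 3) → π (x * y) = 1 := by
        decide
      exact this (v i) (b i) hi.1 hi.2
    rw [Finset.sum_congr rfl e2, Finset.sum_const, nsmul_eq_mul, mul_one]
  rw [key, ZMod.natCast_eq_zero_iff]
  exact ⟨fun h => (even_iff_two_dvd).2 h, fun h => (even_iff_two_dvd).1 h⟩

lemma step5 {n : ℕ} (O : Finset (Fin n)) (c : ℕ) :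
    ((Finset.univ : Finset (Finset (Fin n))).filter fun T =>
        T.card = c ∧ Even ((O ∩ T).card)).card
      = Esum O.card (n - O.card) c := by
  set goodT := (Finset.univ : Finset (Finset (Fin n))).filter fun T =>
    T.card = c ∧ Even ((O ∩ T).card) with hgoodT
  have hmem : ∀ T ∈ goodT, ((O ∩ T).card, (T \ O).card) ∈ Finset.HasAntidiagonal.antidiagonal c := by
    intro T hT
    simp only [hgoodT, Finset.mem_filter] at hT
    rw [Finset.HasAntidiagonal.mem_antidiagonal]
    have := Finset.card_inter_add_card_sdiff T O
    rw [Finset.inter_comm] at this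
    omega
  rw [Finset.card_eq_sum_card_fiberwise hmem]
  rw [Finset.Nat.sum_antidiagonal_eq_sum_range_succ_mk]
  unfold Esum
  apply Finset.sum_congr rfl
  intro j hj
  simp only [Finset.mem_range] at hj
  by_cases hE : Even j
  · rw [if_pos hE]
    have hset : goodT.filter (fun T => ((O ∩ T).card, (T \ O).card) = (j, c - j))
        = Finset.univ.filter (fun T => (O ∩ T).card = j ∧ (T \ O).card = c - j) := by
      ext T
      simp only [hgoodT, Finset.mem_filter, Finset.mem_univ, true_and, Prod.mk.injEq]
      constructor
      · rintro ⟨_, h2⟩; exact h2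
      · rintro ⟨h1, h2⟩
        have hc := Finset.card_inter_add_card_sdiff T O
        rw [Finset.inter_comm] at hc
        refine ⟨⟨by omega, ?_⟩, h1, h2⟩
        rw [h1]; exact hE
    have key1 : ∀ p : Finset (Fin n) × Finset (Fin n),
        p ∈ (O.powersetCard j) ×ˢ ((Oᶜ).powersetCard (c - j)) →
        O ∩ (p.1 ∪ p.2) = p.1 ∧ (p.1 ∪ p.2) \ O = p.2 := by
      intro p hp
      rw [Finset.mem_product, Finset.mem_powersetCard, Finset.mem_powersetCard] at hp
      obtain ⟨⟨hA, _⟩, hB, _⟩ := hp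
      constructor
      · ext x
        simp only [Finset.mem_inter, Finset.mem_union]
        constructor
        · rintro ⟨hxO, hx1 | hx2⟩
          · exact hx1
          · exact absurd hxO (Finset.mem_compl.1 (hB hx2))
        · intro hx1; exact ⟨hA hx1, Or.inl hx1⟩
      · ext x
        simp only [Finset.mem_sdiff, Finset.mem_union]
        constructor
        · rintro ⟨hx1 | hx2, hxO⟩
          · exact absurd (hA hx1) hxO
          · exact hx2
        · intro hx2; exact ⟨Or.inr hx2, Finset.mem_compl.1 (hB hx2)⟩
    have hbij : (Finset.univ.filter fun T : Finset (Fin n) =>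
          (O ∩ T).card = j ∧ (T \ O).card = c - j).card
        = ((O.powersetCard j) ×ˢ ((Oᶜ).powersetCard (c - j))).card := by
      apply Finset.card_bij' (fun T _ => (O ∩ T, T \ O)) (fun p _ => p.1 ∪ p.2)
      · intro T hT
        simp only [Finset.mem_filter, Finset.mem_univ, true_and] at hT
        rw [Finset.mem_product, Finset.mem_powersetCard, Finset.mem_powersetCard]
        refine ⟨⟨Finset.inter_subset_left, hT.1⟩, ⟨?_, hT.2⟩⟩
        intro x hx
        simp only [Finset.mem_sdiff] at hx
        exact Finset.mem_compl.2 hx.2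
      · intro p hp
        obtain ⟨h1, h2⟩ := key1 p hp
        rw [Finset.mem_product, Finset.mem_powersetCard, Finset.mem_powersetCard] at hp
        simp only [Finset.mem_filter, Finset.mem_univ, true_and]
        rw [h1, h2]
        exact ⟨hp.1.2, hp.2.2⟩
      · intro T hT
        ext x
        simp only [Finset.mem_union, Finset.mem_inter, Finset.mem_sdiff]
        by_cases hxO : x ∈ O <;> simp [hxO]
      · intro p hp
        obtain ⟨h1, h2⟩ := key1 p hp
        exact Prod.ext h1 h2
    rw [hset, hbij, Finset.card_product, Finset.card_powersetCard, Finset.card_powersetCard,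
      Finset.card_compl, Fintype.card_fin]
  · rw [if_neg hE]
    rw [Finset.card_eq_zero, Finset.filter_eq_empty_iff]
    intro T hT
    simp only [hgoodT, Finset.mem_filter] at hT
    intro hc
    rw [Prod.mk.injEq] at hc
    exact hE (hc.1 ▸ hT.2.2)

lemma fiber_count {n r s : ℕ} (hn : n = 2 * (r + s)) (T : Finset (Fin n))
    (hT : T.card = 2 * s) :
    (Finset.univ.filter fun b : Fin n → ZMod 4 =>
        HasType b r s r s ∧ oddSupp b = T).card
      = (2 * s).choose s * (2 * r).choose r := by
  set gfun : Finset (Fin n) × Finset (Fin n) → (Fin n → ZMod 4) :=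
    fun p i => if i ∈ T then (if i ∈ p.1 then 1 else 3) else (if i ∈ p.2 then 0 else 2)
    with hgfun
  have main : ∀ p ∈ (T.powersetCard s) ×ˢ ((Tᶜ).powersetCard r),
      (Finset.univ.filter fun i => gfun p i = 1) = p.1
      ∧ (Finset.univ.filter fun i => gfun p i = 0) = p.2
      ∧ (Finset.univ.filter fun i => gfun p i = 3) = T \ p.1
      ∧ (Finset.univ.filter fun i => gfun p i = 2) = Tᶜ \ p.2 := by
    intro p hp
    rw [Finset.mem_product, Finset.mem_powersetCard, Finset.mem_powersetCard] at hp
    obtain ⟨⟨hA, hAc⟩, hB, hBc⟩ := hp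
    refine ⟨?_, ?_, ?_, ?_⟩ <;>
      · ext x
        simp only [Finset.mem_filter, Finset.mem_univ, true_and, hgfun,
          Finset.mem_sdiff, Finset.mem_compl]
        by_cases hxT : x ∈ T <;> by_cases hx1 : x ∈ p.1 <;> by_cases hx2 : x ∈ p.2 <;>
          simp [hxT, hx1, hx2] <;>
          first
            | decide
            | (exact absurd hxT (by simpa using hB hx2))
            | (exact absurd (hA hx1) (by simpa using hB hx2))
            | (intro h; exact absurd (hA hx1) (by simpa using hB hx2))
            | (intro h; exact absurd hxT (by simpa using hB hx2))
            | (intro h; exact hA hx1)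
            | (exact fun h => absurd (hA hx1) hxT)
            | (exact absurd (hA hx1) hxT)
            | (exact fun h => absurd (Finset.mem_compl.1 (hB hx2)) (by simpa using hxT))
            | skip
  have hbij : (Finset.univ.filter fun b : Fin n → ZMod 4 =>
        HasType b r s r s ∧ oddSupp b = T).card
      = ((T.powersetCard s) ×ˢ ((Tᶜ).powersetCard r)).card := by
    apply Finset.card_bij'
      (fun b _ => (Finset.univ.filter fun i => b i = 1, Finset.univ.filter fun i => b i = 0))
      (fun p _ => gfun p)
    · intro b hb
      simp only [Finset.mem_filter, Finset.mem_univ, true_and] at hb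
      obtain ⟨⟨h0, h1, h2, h3⟩, hodd⟩ := hb
      rw [Finset.mem_product, Finset.mem_powersetCard, Finset.mem_powersetCard]
      refine ⟨⟨?_, h1⟩, ?_, h0⟩
      · intro x hx
        simp only [Finset.mem_filter, Finset.mem_univ, true_and] at hx
        rw [← hodd]
        simp only [oddSupp, Finset.mem_filter, Finset.mem_univ, true_and]
        exact Or.inl hx
      · intro x hx
        simp only [Finset.mem_filter, Finset.mem_univ, true_and] at hx
        rw [Finset.mem_compl, ← hodd]
        simp only [oddSupp, Finset.mem_filter, Finset.mem_univ, true_and]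
        rw [hx]
        decide
    · intro p hp
      obtain ⟨f1, f0, f3, f2⟩ := main p hp
      rw [Finset.mem_product, Finset.mem_powersetCard, Finset.mem_powersetCard] at hp
      obtain ⟨⟨hA, hAc⟩, hB, hBc⟩ := hp
      simp only [Finset.mem_filter, Finset.mem_univ, true_and]
      constructor
      · refine ⟨?_, ?_, ?_, ?_⟩
        · show (Finset.univ.filter fun i => gfun p i = 0).card = r
          rw [f0, hBc]
        · show (Finset.univ.filter fun i => gfun p i = 1).card = s
          rw [f1, hAc]
        · show (Finset.univ.filter fun i => gfun p i = 2).card = r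
          rw [f2, Finset.card_sdiff_of_subset hB, Finset.card_compl, Fintype.card_fin, hT, hBc]
          omega
        · show (Finset.univ.filter fun i => gfun p i = 3).card = s
          rw [f3, Finset.card_sdiff_of_subset hA, hT, hAc]
          omega
      · ext x
        simp only [oddSupp, Finset.mem_filter, Finset.mem_univ, true_and, hgfun]
        by_cases hxT : x ∈ T <;> by_cases hx1 : x ∈ p.1 <;> by_cases hx2 : x ∈ p.2 <;>
          simp [hxT, hx1, hx2] <;>
          first
            | decide
            | (exact absurd hxT (by simpa using hB hx2))
            | (exact absurd (hA hx1) hxT)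
            | skip
    · intro b hb
      simp only [Finset.mem_filter, Finset.mem_univ, true_and] at hb
      obtain ⟨⟨h0, h1, h2, h3⟩, hodd⟩ := hb
      funext x
      have hval : ∀ y : ZMod 4, y = 0 ∨ y = 1 ∨ y = 2 ∨ y = 3 := by decide
      by_cases hxT : x ∈ T
      · rw [← hodd] at hxT
        simp only [oddSupp, Finset.mem_filter, Finset.mem_univ, true_and] at hxT
        rcases hxT with hbx | hbx
        · simp [hgfun, hodd ▸ (show x ∈ oddSupp b by
            simp only [oddSupp, Finset.mem_filter, Finset.mem_univ, true_and]
            exact Or.inl hbx), hbx]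
        · have : x ∈ T := by
            rw [← hodd]
            simp only [oddSupp, Finset.mem_filter, Finset.mem_univ, true_and]
            exact Or.inr hbx
          simp only [hgfun, this, if_pos]
          rw [if_neg, hbx]
          simp only [Finset.mem_filter, Finset.mem_univ, true_and]
          rw [hbx]
          decide
      · have hnotodd : ¬(b x = 1 ∨ b x = 3) := by
          rw [← hodd] at hxT
          simpa [oddSupp] using hxT
        have hbx : b x = 0 ∨ b x = 2 := by
          rcases hval (b x) with h | h | h | h
          · exact Or.inl h
          · exact absurd (Or.inl h) hnotodd
          · exact Or.inr h
          · exact absurd (Or.inr h) hnotodd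
        rcases hbx with hbx | hbx
        · simp only [hgfun, hxT, if_neg, if_false]
          rw [if_pos, hbx]
          simp only [Finset.mem_filter, Finset.mem_univ, true_and]
          exact hbx
        · simp only [hgfun, hxT, if_neg, if_false]
          rw [if_neg, hbx]
          simp only [Finset.mem_filter, Finset.mem_univ, true_and]
          rw [hbx]
          decide
    · intro p hp
      obtain ⟨f1, f0, f3, f2⟩ := main p hp
      exact Prod.ext f1 f0
  rw [hbij, Finset.card_product, Finset.card_powersetCard, Finset.card_powersetCard,
    Finset.card_compl, Fintype.card_fin, hT]
  rw [show n - 2 * s = 2 * r by omega]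

lemma count_lemma {n r s : ℕ} (hn : n = 2 * (r + s)) (v : Fin n → ZMod 4) :
    Scard r s v 0 + Scard r s v 2
      = ((2 * s).choose s * (2 * r).choose r)
          * Esum (oddSupp v).card (n - (oddSupp v).card) (2 * s) := by
  set O := oddSupp v with hO
  set M := Finset.univ.filter (fun b : Fin n → ZMod 4 =>
    HasType b r s r s ∧ Even ((O ∩ oddSupp b).card)) with hM
  have step1 : Scard r s v 0 + Scard r s v 2 = M.card := by
    unfold Scard
    rw [← Finset.card_union_of_disjoint (by
      rw [Finset.disjoint_left]
      intro b hb1 hb2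
      simp only [Finset.mem_filter] at hb1 hb2
      have := hb1.2.2 ▸ hb2.2.2
      exact absurd this (by decide))]
    rw [← Finset.filter_or]
    apply congrArg
    apply Finset.filter_congr
    intro b _
    rw [← and_or_left]
    exact and_congr_right fun _ => dot_parity v b
  rw [step1]
  have hMgood : ∀ b ∈ M, oddSupp b ∈ (Finset.univ : Finset (Finset (Fin n))).filter
      (fun T => T.card = 2 * s ∧ Even ((O ∩ T).card)) := by
    intro b hb
    simp only [hM, Finset.mem_filter, Finset.mem_univ, true_and] at hb ⊢
    exact ⟨oddSupp_card b hb.1, hb.2⟩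
  rw [Finset.card_eq_sum_card_fiberwise hMgood]
  have fib : ∀ T ∈ (Finset.univ : Finset (Finset (Fin n))).filter
      (fun T => T.card = 2 * s ∧ Even ((O ∩ T).card)),
      (M.filter fun b => oddSupp b = T).card = (2 * s).choose s * (2 * r).choose r := by
    intro T hT
    simp only [Finset.mem_filter, Finset.mem_univ, true_and] at hT
    have : M.filter (fun b => oddSupp b = T)
        = Finset.univ.filter (fun b : Fin n → ZMod 4 =>
            HasType b r s r s ∧ oddSupp b = T) := by
      ext b
      simp only [hM, Finset.mem_filter, Finset.mem_univ, true_and]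
      constructor
      · rintro ⟨⟨h1, _⟩, h3⟩; exact ⟨h1, h3⟩
      · rintro ⟨h1, h3⟩; exact ⟨⟨h1, h3 ▸ hT.2⟩, h3⟩
    rw [this, fiber_count hn T hT.1]
  rw [Finset.sum_congr rfl fib, Finset.sum_const, smul_eq_mul, mul_comm]
  rw [step5 O (2 * s)]

lemma multinom_eq (r s : ℕ) :
    multinomRSRS r s = (2 * (r + s)).choose (2 * s) * ((2 * s).choose s * (2 * r).choose r) := by
  have spec := Nat.multinomial_spec (s := (Finset.univ : Finset (Fin 4))) (f := ![r, s, r, s])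
  rw [Fin.prod_univ_four, Fin.sum_univ_four] at spec
  simp only [Matrix.cons_val_zero, Matrix.cons_val_one, Matrix.head_cons,
    Matrix.cons_val_two, Matrix.tail_cons, Matrix.cons_val_three] at spec
  have hpos : 0 < r.factorial * s.factorial * r.factorial * s.factorial := by positivity
  apply Nat.eq_of_mul_eq_mul_left hpos
  rw [show multinomRSRS r s = Nat.multinomial Finset.univ ![r, s, r, s] from rfl]
  have h1 := Nat.choose_mul_factorial_mul_factorial (show s ≤ 2 * s by omega)
  rw [show 2 * s - s = s by omega] at h1
  have h2 := Nat.choose_mul_factorial_mul_factorial (show r ≤ 2 * r by omega)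
  rw [show 2 * r - r = r by omega] at h2
  have h3 := Nat.choose_mul_factorial_mul_factorial (show 2 * s ≤ 2 * (r + s) by omega)
  rw [show 2 * (r + s) - 2 * s = 2 * r by omega] at h3
  calc r.factorial * s.factorial * r.factorial * s.factorial
        * Nat.multinomial Finset.univ ![r, s, r, s]
      = (r + s + r + s).factorial := spec
    _ = (2 * (r + s)).factorial := by congr 1; omega
    _ = (2 * (r + s)).choose (2 * s) * (2 * s).factorial * (2 * r).factorial := h3.symm
    _ = (2 * (r + s)).choose (2 * s)
          * (((2 * s).choose s * s.factorial * s.factorial)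
              * ((2 * r).choose r * r.factorial * r.factorial)) := by rw [h1, h2]; ring
    _ = r.factorial * s.factorial * r.factorial * s.factorial
          * ((2 * (r + s)).choose (2 * s) * ((2 * s).choose s * (2 * r).choose r)) := by ring

end BetaAux

open MvPolynomial in
/-- `2·C(n, t₀+t₂)·(|S(v,0)| + |S(v,2)|)` equals
`C(n; r,s,r,s)` times the coefficient of `x^{t₀+t₂} y^{t₁+t₃}` in
`(x+y)^n + (x+y)^{2r}(x-y)^{2s}`. -/
theorem beta_formula (r s n : ℕ) (hn : n = 2 * (r + s)) (hn1 : 1 ≤ n)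
    (v : Fin n → ZMod 4) (t0 t1 t2 t3 : ℕ) (hv : HasType v t0 t1 t2 t3) :
    (2 * n.choose (t0 + t2) * (Scard r s v 0 + Scard r s v 2) : ℤ) =
      (multinomRSRS r s : ℤ) *
        MvPolynomial.coeff
          (Finsupp.single 0 (t0 + t2) + Finsupp.single 1 (t1 + t3))
          ((X 0 + X 1) ^ n + (X 0 + X 1) ^ (2 * r) * (X 0 - X 1) ^ (2 * s) :
            MvPolynomial (Fin 2) ℤ) := by
  have htot := typeCount_total v
  rw [hv.1, hv.2.1, hv.2.2.1, hv.2.2.2] at htot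
  have hOcard : (oddSupp v).card = t1 + t3 := by
    rw [oddSupp, filter_or_card v 1 3 (by decide), hv.2.1, hv.2.2.2]
  have hbn : t1 + t3 ≤ n := by omega
  have h2s : 2 * s ≤ n := by omega
  rw [MvPolynomial.coeff_add]
  rw [show ((X 0 + X 1 : MvPolynomial (Fin 2) ℤ)) ^ n
      = (X 0 + X 1) ^ n * (X 0 - X 1) ^ 0 from by rw [pow_zero, mul_one]]
  rw [coeff_lemma n 0 (t0 + t2) (t1 + t3) (by omega),
    coeff_lemma (2 * r) (2 * s) (t0 + t2) (t1 + t3) (by omega), Dsum_zero]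
  have hcount : (Scard r s v 0 : ℤ) + (Scard r s v 2 : ℤ)
      = (((2 * s).choose s * (2 * r).choose r)
          * Esum (t1 + t3) (t0 + t2) (2 * s) : ℕ) := by
    have := count_lemma hn v
    rw [hOcard, show n - (t1 + t3) = t0 + t2 from by omega] at this
    exact_mod_cast this
  rw [hcount]
  have hmul : (multinomRSRS r s : ℤ)
      = (n.choose (2 * s) : ℤ) * ((2 * s).choose s : ℤ) * ((2 * r).choose r : ℤ) := by
    have := multinom_eq r s
    rw [← hn] at this
    push_cast [this]
    ring
  rw [hmul]
  have hEs := two_esum (t1 + t3) (t0 + t2) (2 * s)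
  rw [show t1 + t3 + (t0 + t2) = n from by omega] at hEs
  have hrec := recip n (t1 + t3) (2 * s) hbn h2s
  rw [show n - (t1 + t3) = t0 + t2 from by omega,
    show n - 2 * s = 2 * r from by omega] at hrec
  have hsym : ((n.choose (t0 + t2) : ℕ) : ℤ) = ((n.choose (t1 + t3) : ℕ) : ℤ) := by
    have : t0 + t2 = n - (t1 + t3) := by omega
    rw [this, Nat.choose_symm hbn]
  push_cast
  push_cast at hEs
  linear_combination (2 * ((2 * s).choose s : ℤ) * ((2 * r).choose r : ℤ)
      * (Esum (t1 + t3) (t0 + t2) (2 * s) : ℤ)) * hsym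
    + (((2 * s).choose s : ℤ) * ((2 * r).choose r : ℤ) * (n.choose (t1 + t3) : ℤ)) * hEs
    + (((2 * s).choose s : ℤ) * ((2 * r).choose r : ℤ)) * hrec
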